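/- arXiv:1706.00152 — 3 statements merged into one kernel-verified Lean document; each statement's English description precedes it below -/
import Mathlib

section
/- Let $n = 2p$, $J = J_-(p)$, and let $U \in U_n$ satisfy $UJ = J\bar{U}$ with all entries in $\{0,1\}$. Then $U$, viewed as a $p \times p$ matrix of $2 \times 2$ blocks, has each block equal to either the zero block or the $2\times 2$ identity, with exactly one identity block per block-row and block-column. Consequently the group $\bar{S}_n = \{U \in U_n \mid UJ = J\bar{U},\ U_{ij} \in \{0,1\}\}$ is isomorphic to the symmetric group $S_p$. -/
/-- The super-identity `J_-(p)`: block-diagonal with `p` blocks `!![0,1;-1,0]`. -/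
def Jminus (p : ℕ) : Matrix (Fin (2 * p)) (Fin (2 * p)) ℂ :=
  Matrix.of fun i j =>
    if (i : ℕ) % 2 = 0 then (if (j : ℕ) = (i : ℕ) + 1 then 1 else 0)
    else (if (j : ℕ) = (i : ℕ) - 1 then -1 else 0)

/-- The index `2k + a` of position `a` in the `k`-th pair. -/
def pidx (p : ℕ) (k : Fin p) (a : Fin 2) : Fin (2 * p) :=
  ⟨2 * (k : ℕ) + (a : ℕ), by omega⟩

/-- The `2 × 2` block of `U` at block-position `(k, l)`. -/
def blk (p : ℕ) (U : Matrix (Fin (2 * p)) (Fin (2 * p)) ℂ) (k l : Fin p) :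
    Matrix (Fin 2) (Fin 2) ℂ :=
  Matrix.of fun a b => U (pidx p k a) (pidx p l b)


namespace S9

open Matrix

def E (p : ℕ) : Fin p × Fin 2 ≃ Fin (2 * p) where
  toFun x := pidx p x.1 x.2
  invFun i := (⟨(i : ℕ) / 2, by have := i.isLt; omega⟩, ⟨(i : ℕ) % 2, by omega⟩)
  left_inv x := by
    ext
    · simp [pidx]; omega
    · simp [pidx]; omega
  right_inv i := by
    ext; simp [pidx]; omega

lemma pidx_inj {p : ℕ} {k l : Fin p} {a b : Fin 2} (h : pidx p k a = pidx p l b) :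
    k = l ∧ a = b := by
  have h' : 2 * (k : ℕ) + a = 2 * (l : ℕ) + b := congrArg Fin.val h
  have ha := a.isLt; have hb := b.isLt
  constructor <;> · ext; omega

lemma pidx_surj {p : ℕ} (i : Fin (2 * p)) : ∃ k a, i = pidx p k a :=
  ⟨((E p).symm i).1, ((E p).symm i).2, ((E p).apply_symm_apply i).symm⟩

lemma sum_pidx {p : ℕ} (f : Fin (2 * p) → ℂ) :
    ∑ i, f i = ∑ k : Fin p, ∑ a : Fin 2, f (pidx p k a) := by
  rw [← Equiv.sum_comp (E p) f, Fintype.sum_prod_type]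
  rfl

def j2 (a b : Fin 2) : ℂ := if a = 0 ∧ b = 1 then 1 else if a = 1 ∧ b = 0 then -1 else 0

lemma J_pidx {p : ℕ} (k l : Fin p) (a b : Fin 2) :
    Jminus p (pidx p k a) (pidx p l b) = if k = l then j2 a b else 0 := by
  have hk := k.isLt; have hl := l.isLt
  simp only [Jminus, Matrix.of_apply, pidx, j2, Fin.ext_iff]
  fin_cases a <;> fin_cases b <;>
    · simp only []
      split_ifs <;> first | rfl | omega

def Mmat {p : ℕ} (σ : Equiv.Perm (Fin p)) : Matrix (Fin (2 * p)) (Fin (2 * p)) ℂ :=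
  Matrix.of fun i j =>
    if σ ((E p).symm j).1 = ((E p).symm i).1 ∧ ((E p).symm i).2 = ((E p).symm j).2
    then 1 else 0

lemma Esymm_pidx {p : ℕ} (k : Fin p) (a : Fin 2) : (E p).symm (pidx p k a) = (k, a) :=
  (E p).symm_apply_apply (k, a)

lemma Mmat_pidx {p : ℕ} (σ : Equiv.Perm (Fin p)) (k l : Fin p) (a b : Fin 2) :
    Mmat σ (pidx p k a) (pidx p l b) = if σ l = k ∧ a = b then 1 else 0 := by
  simp [Mmat, Esymm_pidx]

lemma dsum {p : ℕ} (f : Fin p → Fin 2 → ℂ) (m0 : Fin p) (c0 : Fin 2)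
    (h : ∀ m c, ¬(m = m0 ∧ c = c0) → f m c = 0) :
    ∑ m, ∑ c, f m c = f m0 c0 := by
  rw [Finset.sum_eq_single m0]
  · rw [Finset.sum_eq_single c0]
    · intro c _ hc; exact h m0 c (by tauto)
    · simp
  · intro m _ hm
    apply Finset.sum_eq_zero
    intro c _; exact h m c (by tauto)
  · simp

lemma mul_pidx {p : ℕ} (A B : Matrix (Fin (2 * p)) (Fin (2 * p)) ℂ) (i j : Fin (2 * p)) :
    (A * B) i j = ∑ m : Fin p, ∑ c : Fin 2, A i (pidx p m c) * B (pidx p m c) j := by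
  rw [Matrix.mul_apply, sum_pidx]

lemma Mmat_mul {p : ℕ} (σ τ : Equiv.Perm (Fin p)) : Mmat σ * Mmat τ = Mmat (σ * τ) := by
  ext i j
  obtain ⟨k, a, rfl⟩ := pidx_surj i
  obtain ⟨l, b, rfl⟩ := pidx_surj j
  rw [mul_pidx, Mmat_pidx]
  rw [dsum _ (τ l) b]
  · rw [Mmat_pidx, Mmat_pidx]
    by_cases h1 : σ (τ l) = k <;> by_cases h2 : a = b <;>
      simp [h1, h2, Equiv.Perm.mul_apply]
  · intro m c hmc
    rw [Mmat_pidx, Mmat_pidx]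
    by_cases h1 : τ l = m <;> by_cases h2 : c = b <;> simp_all

lemma Mmat_one {p : ℕ} : Mmat (1 : Equiv.Perm (Fin p)) = 1 := by
  ext i j
  obtain ⟨k, a, rfl⟩ := pidx_surj i
  obtain ⟨l, b, rfl⟩ := pidx_surj j
  rw [Mmat_pidx, Matrix.one_apply]
  by_cases h : pidx p k a = pidx p l b
  · obtain ⟨rfl, rfl⟩ := pidx_inj h
    simp
  · rw [if_neg h, if_neg]
    rintro ⟨rfl, rfl⟩
    simp at h

lemma Mmat_conjTranspose {p : ℕ} (σ : Equiv.Perm (Fin p)) :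
    (Mmat σ)ᴴ = Mmat σ⁻¹ := by
  ext i j
  obtain ⟨k, a, rfl⟩ := pidx_surj i
  obtain ⟨l, b, rfl⟩ := pidx_surj j
  rw [Matrix.conjTranspose_apply, Mmat_pidx, Mmat_pidx]
  have : σ k = l ∧ b = a ↔ σ⁻¹ l = k ∧ a = b := by
    constructor
    · rintro ⟨rfl, rfl⟩; simp
    · rintro ⟨rfl, rfl⟩; simp
  rw [show (if σ⁻¹ l = k ∧ a = b then (1:ℂ) else 0) = if σ k = l ∧ b = a then (1:ℂ) else 0
    from by rw [if_congr this.symm rfl rfl]]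
  split_ifs <;> simp

lemma Mmat_mem {p : ℕ} (σ : Equiv.Perm (Fin p)) :
    Mmat σ ∈ Matrix.unitaryGroup (Fin (2 * p)) ℂ := by
  rw [Matrix.mem_unitaryGroup_iff, Matrix.star_eq_conjTranspose, Mmat_conjTranspose,
    Mmat_mul, mul_inv_cancel, Mmat_one]

lemma Mmat_map {p : ℕ} (σ : Equiv.Perm (Fin p)) :
    (Mmat σ).map (starRingEnd ℂ) = Mmat σ := by
  ext i j
  rw [Matrix.map_apply]
  simp only [Mmat, Matrix.of_apply]
  split_ifs <;> simp

lemma Mmat_01 {p : ℕ} (σ : Equiv.Perm (Fin p)) (i j : Fin (2 * p)) :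
    Mmat σ i j = 0 ∨ Mmat σ i j = 1 := by
  simp only [Mmat, Matrix.of_apply]
  split_ifs <;> simp

lemma mulJ_entry {p : ℕ} (A : Matrix (Fin (2 * p)) (Fin (2 * p)) ℂ) (i : Fin (2 * p))
    (l : Fin p) (b : Fin 2) :
    (A * Jminus p) i (pidx p l b) =
      A i (pidx p l 0) * j2 0 b + A i (pidx p l 1) * j2 1 b := by
  rw [mul_pidx]
  rw [Finset.sum_eq_single l]
  . rw [Fin.sum_univ_two, J_pidx, J_pidx, if_pos rfl, if_pos rfl]
  . intro m _ hm
    apply Finset.sum_eq_zero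
    intro c _
    rw [J_pidx, if_neg hm, mul_zero]
  . simp

lemma Jmul_entry {p : ℕ} (A : Matrix (Fin (2 * p)) (Fin (2 * p)) ℂ) (k : Fin p) (a : Fin 2)
    (j : Fin (2 * p)) :
    (Jminus p * A) (pidx p k a) j =
      j2 a 0 * A (pidx p k 0) j + j2 a 1 * A (pidx p k 1) j := by
  rw [mul_pidx]
  rw [Finset.sum_eq_single k]
  . rw [Fin.sum_univ_two, J_pidx, J_pidx, if_pos rfl, if_pos rfl]
  . intro m _ hm
    apply Finset.sum_eq_zero
    intro c _
    rw [J_pidx, if_neg (fun h => hm h.symm), zero_mul]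
  . simp

lemma Mmat_commJ {p : ℕ} (σ : Equiv.Perm (Fin p)) :
    Mmat σ * Jminus p = Jminus p * (Mmat σ).map (starRingEnd ℂ) := by
  rw [Mmat_map]
  ext i j
  obtain ⟨k, a, rfl⟩ := pidx_surj i
  obtain ⟨l, b, rfl⟩ := pidx_surj j
  rw [mulJ_entry, Jmul_entry, Mmat_pidx, Mmat_pidx, Mmat_pidx, Mmat_pidx]
  by_cases h : σ l = k <;> fin_cases a <;> fin_cases b <;> simp [h, j2]

lemma sum01 {ι : Type*} [Fintype ι] [DecidableEq ι] (f : ι → ℂ)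
    (h : ∀ i, f i = 0 ∨ f i = 1) (h1 : ∑ i, f i = 1) : ∃! i, f i = 1 := by
  classical
  have hs : ∑ i, f i = ((Finset.univ.filter fun i => f i = 1).card : ℂ) := by
    rw [Finset.card_filter]
    push_cast
    apply Finset.sum_congr rfl
    intro i _
    rcases h i with h'|h' <;> simp [h']
  rw [hs] at h1
  have hc : (Finset.univ.filter fun i => f i = 1).card = 1 := by exact_mod_cast h1
  obtain ⟨a, ha⟩ := Finset.card_eq_one.1 hc
  refine ⟨a, ?_, ?_⟩
  · have : a ∈ Finset.univ.filter fun i => f i = 1 := by rw [ha]; exact Finset.mem_singleton_self a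
    exact (Finset.mem_filter.1 this).2
  · intro b hb
    have : b ∈ Finset.univ.filter fun i => f i = 1 := Finset.mem_filter.2 ⟨Finset.mem_univ b, hb⟩
    rw [ha] at this
    exact Finset.mem_singleton.1 this

lemma row_unique {p : ℕ} {U : Matrix (Fin (2 * p)) (Fin (2 * p)) ℂ}
    (hU : U ∈ Matrix.unitaryGroup (Fin (2 * p)) ℂ)
    (h01 : ∀ i j, U i j = 0 ∨ U i j = 1) (i : Fin (2 * p)) : ∃! j, U i j = 1 := by
  have hUU : U * star U = 1 := Matrix.mem_unitaryGroup_iff.1 hU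
  have hdiag := congrFun (congrFun hUU i) i
  rw [Matrix.mul_apply, Matrix.one_apply_eq] at hdiag
  apply sum01 _ (h01 i)
  rw [← hdiag]
  apply Finset.sum_congr rfl
  intro j _
  rw [Matrix.star_apply]
  rcases h01 i j with h'|h' <;> simp [h']

lemma col_unique {p : ℕ} {U : Matrix (Fin (2 * p)) (Fin (2 * p)) ℂ}
    (hU : U ∈ Matrix.unitaryGroup (Fin (2 * p)) ℂ)
    (h01 : ∀ i j, U i j = 0 ∨ U i j = 1) (j : Fin (2 * p)) : ∃! i, U i j = 1 := by
  have hUU : star U * U = 1 := Matrix.mem_unitaryGroup_iff'.1 hU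
  have hdiag := congrFun (congrFun hUU j) j
  rw [Matrix.mul_apply, Matrix.one_apply_eq] at hdiag
  apply sum01 _ (fun i => h01 i j)
  rw [← hdiag]
  apply Finset.sum_congr rfl
  intro i _
  rw [Matrix.star_apply]
  rcases h01 i j with h'|h' <;> simp [h']

lemma map_conj_eq {p : ℕ} {U : Matrix (Fin (2 * p)) (Fin (2 * p)) ℂ}
    (h01 : ∀ i j, U i j = 0 ∨ U i j = 1) : U.map (starRingEnd ℂ) = U := by
  ext i j
  rw [Matrix.map_apply]
  rcases h01 i j with h'|h' <;> simp [h']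

lemma block_struct {p : ℕ} {U : Matrix (Fin (2 * p)) (Fin (2 * p)) ℂ}
    (hJ : U * Jminus p = Jminus p * U)
    (h01 : ∀ i j, U i j = 0 ∨ U i j = 1) (k l : Fin p) :
    U (pidx p k 0) (pidx p l 1) = 0 ∧ U (pidx p k 1) (pidx p l 0) = 0 ∧
      U (pidx p k 0) (pidx p l 0) = U (pidx p k 1) (pidx p l 1) := by
  have e00 := congrFun (congrFun hJ (pidx p k 0)) (pidx p l 0)
  have e01 := congrFun (congrFun hJ (pidx p k 0)) (pidx p l 1)
  rw [mulJ_entry, Jmul_entry] at e00 e01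
  simp only [j2] at e00 e01
  norm_num at e00 e01
  -- e00 : -U (k0)(l1) = U (k1)(l0) ; e01 : U(k0)(l0) = U(k1)(l1)
  refine ⟨?_, ?_, e01⟩
  · rcases h01 (pidx p k 0) (pidx p l 1) with h'|h' <;>
      rcases h01 (pidx p k 1) (pidx p l 0) with h''|h'' <;> simp_all
    norm_num at e00
  · rcases h01 (pidx p k 0) (pidx p l 1) with h'|h' <;>
      rcases h01 (pidx p k 1) (pidx p l 0) with h''|h'' <;> simp_all
    norm_num at e00

lemma blk_eq {p : ℕ} (U : Matrix (Fin (2 * p)) (Fin (2 * p)) ℂ) (k l : Fin p) (a b : Fin 2) :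
    blk p U k l a b = U (pidx p k a) (pidx p l b) := rfl

lemma analysis {p : ℕ} (U : Matrix (Fin (2 * p)) (Fin (2 * p)) ℂ)
    (hU : U ∈ Matrix.unitaryGroup (Fin (2 * p)) ℂ)
    (hJ : U * Jminus p = Jminus p * U.map (starRingEnd ℂ))
    (h01 : ∀ i j, U i j = 0 ∨ U i j = 1) :
    (∀ k l : Fin p, blk p U k l = 0 ∨ blk p U k l = 1) ∧
    (∀ k : Fin p, ∃! l : Fin p, blk p U k l = 1) ∧
    (∀ l : Fin p, ∃! k : Fin p, blk p U k l = 1) ∧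
    ∃ σ : Equiv.Perm (Fin p), U = Mmat σ := by
  rw [map_conj_eq h01] at hJ
  have bs := block_struct hJ h01
  -- blocks are 0 or 1, controlled by the (0,0) entry
  have hblk0 : ∀ k l, U (pidx p k 0) (pidx p l 0) = 0 → blk p U k l = 0 := by
    intro k l h
    ext a b
    fin_cases a <;> fin_cases b <;>
      simp [blk_eq, h, (bs k l).1, (bs k l).2.1, ← (bs k l).2.2]
  have hblk1 : ∀ k l, U (pidx p k 0) (pidx p l 0) = 1 → blk p U k l = 1 := by
    intro k l h
    ext a b
    fin_cases a <;> fin_cases b <;>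
      simp [blk_eq, h, (bs k l).1, (bs k l).2.1, ← (bs k l).2.2, Matrix.one_apply]
  have hblk01 : ∀ k l, blk p U k l = 0 ∨ blk p U k l = 1 := by
    intro k l
    rcases h01 (pidx p k 0) (pidx p l 0) with h|h
    · exact Or.inl (hblk0 k l h)
    · exact Or.inr (hblk1 k l h)
  have blk_iff : ∀ k l, blk p U k l = 1 ↔ U (pidx p k 0) (pidx p l 0) = 1 := by
    intro k l
    constructor
    · intro h
      have := congrFun (congrFun h 0) 0
      rw [blk_eq] at this
      simpa using this
    · exact hblk1 k l
  have rowex : ∀ k, ∃! l, blk p U k l = 1 := by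
    intro k
    obtain ⟨j, hj, hjun⟩ := row_unique hU h01 (pidx p k 0)
    obtain ⟨l, c, rfl⟩ := pidx_surj j
    have hc : c = 0 := by
      by_contra hc
      have hc1 : c = 1 := by omega
      rw [hc1, (bs k l).1] at hj
      exact zero_ne_one hj
    subst hc
    refine ⟨l, (blk_iff k l).2 hj, ?_⟩
    intro l' hl'
    have := hjun (pidx p l' 0) ((blk_iff k l').1 hl')
    exact (pidx_inj this).1
  have colex : ∀ l, ∃! k, blk p U k l = 1 := by
    intro l
    obtain ⟨i, hi, hiun⟩ := col_unique hU h01 (pidx p l 0)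
    obtain ⟨k, c, rfl⟩ := pidx_surj i
    have hc : c = 0 := by
      by_contra hc
      have hc1 : c = 1 := by omega
      rw [hc1, (bs k l).2.1] at hi
      exact zero_ne_one hi
    subst hc
    refine ⟨k, (blk_iff k l).2 hi, ?_⟩
    intro k' hk'
    have := hiun (pidx p k' 0) ((blk_iff k' l).1 hk')
    exact (pidx_inj this).1
  refine ⟨hblk01, rowex, colex, ?_⟩
  -- build the permutation
  refine ⟨⟨fun l => (colex l).choose, fun k => (rowex k).choose, ?_, ?_⟩, ?_⟩
  · intro l
    exact ((rowex (colex l).choose).choose_spec.2 l (colex l).choose_spec.1).symm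
  · intro k
    exact ((colex (rowex k).choose).choose_spec.2 k (rowex k).choose_spec.1).symm
  · ext i j
    obtain ⟨k, a, rfl⟩ := pidx_surj i
    obtain ⟨l, b, rfl⟩ := pidx_surj j
    rw [Mmat_pidx]
    by_cases hk : (colex l).choose = k
    · have hb1 : blk p U k l = 1 := hk ▸ (colex l).choose_spec.1
      have := congrFun (congrFun hb1 a) b
      rw [blk_eq] at this
      rw [this, Matrix.one_apply]
      simp [hk]
    · have hb0 : blk p U k l = 0 := by
        rcases hblk01 k l with h|h
        · exact h
        · exact absurd ((colex l).choose_spec.2 k h).symm hk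
      have := congrFun (congrFun hb0 a) b
      rw [blk_eq] at this
      rw [this]
      simp [hk]

def phi (p : ℕ) : Equiv.Perm (Fin p) →* Matrix.unitaryGroup (Fin (2 * p)) ℂ where
  toFun σ := ⟨Mmat σ, Mmat_mem σ⟩
  map_one' := Subtype.ext Mmat_one
  map_mul' σ τ := Subtype.ext (Mmat_mul σ τ).symm

lemma phi_inj (p : ℕ) : Function.Injective (phi p) := by
  intro σ τ h
  have h' : Mmat σ = Mmat τ := congrArg Subtype.val h
  ext l
  have := congrFun (congrFun h' (pidx p (σ l) 0)) (pidx p l 0)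
  rw [Mmat_pidx, Mmat_pidx] at this
  simp only [and_true, if_pos rfl] at this
  by_cases h'' : τ l = σ l
  · exact congrArg Fin.val h''.symm
  · simp [h''] at this

end S9

/-- A unitary `U` with `U J = J Ū` (`J = J_-(p)`) and entries in `{0,1}` has all
`2 × 2` blocks equal to `0` or `1`, with exactly one identity block in each block-row
and block-column; consequently `S̄_n ≅ S_p`. -/
theorem stmt_9 (p : ℕ) :
    (∀ U : Matrix (Fin (2 * p)) (Fin (2 * p)) ℂ,
      U ∈ Matrix.unitaryGroup (Fin (2 * p)) ℂ →
      U * Jminus p = Jminus p * U.map (starRingEnd ℂ) →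
      (∀ i j, U i j = 0 ∨ U i j = 1) →
      (∀ k l : Fin p, blk p U k l = 0 ∨ blk p U k l = 1) ∧
      (∀ k : Fin p, ∃! l : Fin p, blk p U k l = 1) ∧
      (∀ l : Fin p, ∃! k : Fin p, blk p U k l = 1)) ∧
    ∃ H : Subgroup (Matrix.unitaryGroup (Fin (2 * p)) ℂ),
      (∀ U : Matrix.unitaryGroup (Fin (2 * p)) ℂ,
        U ∈ H ↔ ((U : Matrix (Fin (2 * p)) (Fin (2 * p)) ℂ) * Jminus p =
            Jminus p * (U : Matrix (Fin (2 * p)) (Fin (2 * p)) ℂ).map (starRingEnd ℂ) ∧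
          ∀ i j, (U : Matrix (Fin (2 * p)) (Fin (2 * p)) ℂ) i j = 0 ∨
            (U : Matrix (Fin (2 * p)) (Fin (2 * p)) ℂ) i j = 1)) ∧
      Nonempty (H ≃* Equiv.Perm (Fin p)) := by
  constructor
  · intro U hU hJ h01
    obtain ⟨h1, h2, h3, _⟩ := S9.analysis U hU hJ h01
    exact ⟨h1, h2, h3⟩
  · refine ⟨(S9.phi p).range, ?_, ⟨(MonoidHom.ofInjective (S9.phi_inj p)).symm⟩⟩
    intro U
    constructor
    · rintro ⟨σ, rfl⟩
      exact ⟨S9.Mmat_commJ σ, S9.Mmat_01 σ⟩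
    · rintro ⟨hJ, h01⟩
      obtain ⟨_, _, _, σ, hσ⟩ := S9.analysis (U : Matrix (Fin (2 * p)) (Fin (2 * p)) ℂ) U.2 hJ h01
      exact ⟨σ, Subtype.ext hσ.symm⟩
end

section
/- Let $n = 2p+q$, $J = J_+(p,q)$, and let $U \in U_n$ satisfy $UJ = J\bar{U}$ with all entries in $\{0,1\}$. Then the group $\bar{S}_n = \{U \in U_n \mid UJ = J\bar{U},\ U_{ij} \in \{0,1\}\}$ is isomorphic to the direct product $H_p \times S_q$, where $H_p$ is the hyperoctahedral group (signed permutation group) of rank $p$ and $S_q$ the symmetric group on $q$ letters. -/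
/-- The super-identity `J_+(p,q)`: block-diagonal with `p` blocks `!![0,1;1,0]`
followed by the identity `I_q`. -/
def Jplus (p q : ℕ) : Matrix (Fin (2 * p + q)) (Fin (2 * p + q)) ℂ :=
  Matrix.of fun i j =>
    if (i : ℕ) < 2 * p then
      (if (j : ℕ) = (if (i : ℕ) % 2 = 0 then (i : ℕ) + 1 else (i : ℕ) - 1) then 1 else 0)
    else (if i = j then 1 else 0)


set_option linter.unusedSectionVars false

open Matrix Equiv

noncomputable section

variable {m : Type*} [DecidableEq m] [Fintype m]

/-- permutation matrix, column convention -/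
def PM (π : Equiv.Perm m) : Matrix m m ℂ :=
  Matrix.of fun i j => if π j = i then 1 else 0

lemma PM_apply (π : Equiv.Perm m) (i j : m) : PM π i j = if π j = i then 1 else 0 := rfl

lemma PM_one : PM (1 : Equiv.Perm m) = 1 := by
  ext i j; simp [PM_apply, Matrix.one_apply, eq_comm]

lemma PM_mul (a b : Equiv.Perm m) : PM (a * b) = PM a * PM b := by
  ext i j
  rw [Matrix.mul_apply, Finset.sum_eq_single (b j)]
  · simp [PM_apply]; congr
  · intro k _ hk
    simp [PM_apply, (Ne.symm hk : ¬ b j = k)]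
  · simp

lemma PM_star (π : Equiv.Perm m) : star (PM π) = PM π⁻¹ := by
  ext i j
  simp only [Matrix.star_apply, PM_apply]
  by_cases h : π i = j
  · rw [if_pos h, if_pos (by simp [← h]), star_one]
  · rw [if_neg h, if_neg (fun hc => h (by simp [← hc])), star_zero]

lemma PM_unitary (π : Equiv.Perm m) : PM π ∈ Matrix.unitaryGroup m ℂ := by
  constructor <;>
    rw [PM_star, ← PM_mul] <;> simp [PM_one]

lemma PM_injective : Function.Injective (PM (m := m)) := by
  intro a b h
  ext j
  have h1 : PM a (a j) j = PM b (a j) j := by rw [h]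
  have h2 : (1 : ℂ) = if b j = a j then 1 else 0 := by
    rw [PM_apply, PM_apply, if_pos rfl] at h1; exact h1
  by_contra hne
  rw [if_neg (fun hc => hne hc.symm)] at h2
  exact one_ne_zero h2

/-- the hom into the unitary group -/
def PMhom (m : Type*) [DecidableEq m] [Fintype m] : Equiv.Perm m →* Matrix.unitaryGroup m ℂ where
  toFun π := ⟨PM π, PM_unitary π⟩
  map_one' := Subtype.ext PM_one
  map_mul' a b := Subtype.ext (PM_mul a b)

lemma PMhom_injective : Function.Injective (PMhom m) := by
  intro a b h
  have : PM a = PM b := congrArg (fun u : Matrix.unitaryGroup m ℂ => (u : Matrix m m ℂ)) h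
  exact PM_injective this

/-- unique index where a boolean-valued row/col with sum 1 is 1 -/
lemma exists_unique_of_sum_one {f : m → ℂ} (h : ∀ i, f i = 0 ∨ f i = 1)
    (hs : ∑ i, f i = 1) : ∃! i, f i = 1 := by
  classical
  have : ∑ i, f i = (Finset.univ.filter fun i => f i = 1).card := by
    rw [Finset.card_filter]
    push_cast
    refine Finset.sum_congr rfl fun i _ => ?_
    rcases h i with h0 | h0 <;> simp [h0]
  rw [this] at hs
  have hcard : (Finset.univ.filter fun i => f i = 1).card = 1 := by
    exact_mod_cast hs
  obtain ⟨a, ha⟩ := Finset.card_eq_one.mp hcard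
  refine ⟨a, ?_, ?_⟩
  · have : a ∈ Finset.univ.filter fun i => f i = 1 := ha ▸ Finset.mem_singleton_self a
    simpa using this
  · intro b hb
    have : b ∈ Finset.univ.filter fun i => f i = 1 := by simpa using hb
    rw [ha] at this
    simpa using this

def flipB : Equiv.Perm Bool := ⟨Bool.not, Bool.not, Bool.not_not, Bool.not_not⟩

def flipAll (p : ℕ) : Equiv.Perm (Fin p × Bool) := Equiv.prodCongr (Equiv.refl _) flipB

def sigSum (p q : ℕ) : Equiv.Perm ((Fin p × Bool) ⊕ Fin q) :=
  Equiv.sumCongr (flipAll p) (Equiv.refl _)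

def EeF (p q : ℕ) (i : Fin (2*p+q)) : (Fin p × Bool) ⊕ Fin q :=
  if h : (i : ℕ) < 2*p then
    Sum.inl (⟨(i:ℕ)/2, by omega⟩, decide ((i:ℕ) % 2 = 1))
  else Sum.inr ⟨(i:ℕ) - 2*p, by have := i.2; omega⟩

def EeI (p q : ℕ) (x : (Fin p × Bool) ⊕ Fin q) : Fin (2*p+q) :=
  match x with
  | Sum.inl (a, s) => ⟨2*(a:ℕ) + (if s then 1 else 0), by have := a.2; split <;> omega⟩
  | Sum.inr b => ⟨2*p + (b:ℕ), by have := b.2; omega⟩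

def Ee (p q : ℕ) : Fin (2*p+q) ≃ (Fin p × Bool) ⊕ Fin q where
  toFun := EeF p q
  invFun := EeI p q
  left_inv i := by
    by_cases h : (i:ℕ) < 2*p
    · simp only [EeF, dif_pos h, EeI]
      apply Fin.ext
      rcases Nat.mod_two_eq_zero_or_one (i:ℕ) with h2 | h2 <;> simp [h2] <;> omega
    · simp only [EeF, dif_neg h, EeI]
      apply Fin.ext
      simp only []
      omega
  right_inv x := by
    rcases x with ⟨a, s⟩ | b
    · have hlt : 2*(a:ℕ) + (if s then 1 else 0) < 2*p := by have := a.2; split <;> omega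
      simp only [EeI, EeF, dif_pos hlt]
      cases s <;> simp
      rw [dif_pos (show 2*(a:ℕ)+1 < 2*p by simpa using hlt)]
      exact congrArg (fun x => Sum.inl (x, true)) (Fin.ext (show (2*(a:ℕ)+1)/2 = (a:ℕ) by omega))
    · have hge : ¬ (2*p + (b:ℕ) < 2*p) := by omega
      simp only [EeI, EeF, dif_neg hge]
      simp

def permCongrMul {α β : Type*} (e : α ≃ β) : Equiv.Perm α ≃* Equiv.Perm β where
  toFun π := (e.symm.trans π).trans e
  invFun π := (e.trans π).trans e.symm
  left_inv π := by ext x; simp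
  right_inv π := by ext x; simp
  map_mul' a b := by ext x; simp

def sigBig (p q : ℕ) : Equiv.Perm (Fin (2*p+q)) := (permCongrMul (Ee p q)).symm (sigSum p q)

lemma sigBig_apply (p q : ℕ) (j : Fin (2*p+q)) :
    sigBig p q j = (Ee p q).symm (sigSum p q (Ee p q j)) := rfl

lemma sigBig_val (p q : ℕ) (j : Fin (2*p+q)) :
    ((sigBig p q j : ℕ)) = if (j:ℕ) < 2*p then 2*((j:ℕ)/2) + (1 - (j:ℕ)%2) else (j:ℕ) := by
  rw [sigBig_apply]
  by_cases hj : (j:ℕ) < 2*p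
  · rw [if_pos hj]
    simp only [Ee, Equiv.coe_fn_mk, EeF, EeI, dif_pos hj, sigSum, flipAll, flipB, Equiv.sumCongr_apply,
      Sum.map_inl, Equiv.prodCongr_apply, Prod.map, Equiv.coe_fn_symm_mk, Equiv.coe_refl, id_eq,
      Equiv.coe_fn_mk]
    rcases Nat.mod_two_eq_zero_or_one (j:ℕ) with h2 | h2 <;> simp [h2]
  · rw [if_neg hj]
    simp only [Ee, Equiv.coe_fn_mk, EeF, EeI, dif_neg hj, sigSum, Equiv.sumCongr_apply, Sum.map_inr,
      Equiv.coe_refl, id_eq, Equiv.coe_fn_symm_mk]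
    have := j.2; omega

lemma Jplus_eq (p q : ℕ) : Jplus p q = PM (sigBig p q) := by
  ext i j
  rw [PM_apply]
  have hiff : (sigBig p q j = i) ↔
      ((i:ℕ) = if (j:ℕ) < 2*p then 2*((j:ℕ)/2) + (1 - (j:ℕ)%2) else (j:ℕ)) := by
    rw [Fin.ext_iff, sigBig_val, eq_comm]
  simp only [Jplus, Matrix.of_apply]
  by_cases hj : (j:ℕ) < 2*p
  · rw [if_pos hj] at hiff
    by_cases hs : sigBig p q j = i
    · rw [if_pos hs]
      have hn := hiff.mp hs
      have hi : (i:ℕ) < 2*p := by omega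
      rw [if_pos hi, if_pos (show (j:ℕ) = _ by split_ifs <;> omega)]
    · rw [if_neg hs]
      rw [hiff] at hs
      by_cases hi : (i:ℕ) < 2*p
      · rw [if_pos hi, if_neg (show ¬ (j:ℕ) = _ from ?_)]
        intro hc
        apply hs
        split_ifs at hc <;> omega
      · rw [if_neg hi, if_neg (show ¬ i = j from fun hc => by
          have := congrArg Fin.val hc; simp only [Fin.ext_iff] at hc; omega)]
  · rw [if_neg hj] at hiff
    by_cases hi : (i:ℕ) < 2*p
    · rw [if_pos hi, if_neg (show ¬ (j:ℕ) = _ by split_ifs <;> omega),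
        if_neg (fun hs => by have := hiff.mp hs; omega)]
    · rw [if_neg hi]
      by_cases he : i = j
      · rw [if_pos he, if_pos (hiff.mpr (by rw [he]))]
      · rw [if_neg he, if_neg (fun hs => he (Fin.ext (hiff.mp hs)))]

lemma perm_of_01 {U : Matrix m m ℂ}
    (hU : U ∈ Matrix.unitaryGroup m ℂ) (h01 : ∀ i j, U i j = 0 ∨ U i j = 1) :
    ∃ π : Equiv.Perm m, U = PM π := by
  have hcol : ∀ j, ∃! i, U i j = 1 := by
    intro j
    apply exists_unique_of_sum_one (fun i => h01 i j)
    have h1 : (star U * U) j j = 1 := by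
      rw [(Unitary.mem_iff.mp hU).1]; simp [Matrix.one_apply]
    rw [Matrix.mul_apply] at h1
    rw [← h1]
    refine Finset.sum_congr rfl fun i _ => ?_
    rcases h01 i j with h0 | h0 <;>
      simp [Matrix.star_apply, h0]
  have hrow : ∀ i, ∃! j, U i j = 1 := by
    intro i
    apply exists_unique_of_sum_one (fun j => h01 i j)
    have h1 : (U * star U) i i = 1 := by
      rw [(Unitary.mem_iff.mp hU).2]; simp [Matrix.one_apply]
    rw [Matrix.mul_apply] at h1
    rw [← h1]
    refine Finset.sum_congr rfl fun j _ => ?_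
    rcases h01 i j with h0 | h0 <;>
      simp [Matrix.star_apply, h0]
  choose f hf hf' using hcol
  have hinj : Function.Injective f := by
    intro a b hab
    exact (hrow (f a)).unique (hf a) (hab ▸ hf b)
  have hbij : Function.Bijective f := (Finite.injective_iff_bijective).mp hinj
  refine ⟨Equiv.ofBijective f hbij, ?_⟩
  ext i j
  rw [PM_apply]
  simp only [Equiv.ofBijective_apply]
  by_cases h : f j = i
  · rw [if_pos h, ← h]; exact hf j
  · rw [if_neg h]
    rcases h01 i j with h0 | h0
    · exact h0
    · exact absurd (hf' j i h0).symm h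
section Signed

variable {p : ℕ}

lemma mem_centK_iff {π : Equiv.Perm (Fin p × Bool)} :
    π ∈ Subgroup.centralizer {flipAll p} ↔ ∀ x, π (x.1, !x.2) = ((π x).1, !(π x).2) := by
  rw [Subgroup.mem_centralizer_iff]
  constructor
  · intro h x
    have := congrArg (fun ρ => ρ x) (h (flipAll p) rfl)
    simp only [Equiv.Perm.mul_apply] at this
    exact this.symm
  · intro h g hg
    rcases hg with rfl
    refine Equiv.ext fun x => ?_
    exact (h x).symm

def SM (p : ℕ) (π : Equiv.Perm (Fin p × Bool)) : Matrix (Fin p) (Fin p) ℂ :=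
  Matrix.of fun a b =>
    (if π (b, false) = (a, false) then 1 else 0) - (if π (b, false) = (a, true) then 1 else 0)

lemma SM_apply (π : Equiv.Perm (Fin p × Bool)) (a b : Fin p) :
    SM p π a b =
      (if π (b, false) = (a, false) then 1 else 0) -
        (if π (b, false) = (a, true) then 1 else 0) := rfl

lemma SM_apply_eq (π : Equiv.Perm (Fin p × Bool)) (a b c : Fin p) (s : Bool)
    (h : π (b, false) = (c, s)) :
    SM p π a b = if c = a then (if s then (-1 : ℂ) else 1) else 0 := by
  rw [SM_apply, h]
  by_cases hc : c = a
  · subst hc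
    cases s <;> simp
  · rw [if_neg hc, if_neg (by simp [hc]), if_neg (by simp [hc]), sub_zero]

lemma SM_mem01 (π : Equiv.Perm (Fin p × Bool)) (a b : Fin p) :
    SM p π a b = 0 ∨ SM p π a b = 1 ∨ SM p π a b = -1 := by
  rcases hx : π (b, false) with ⟨c, s⟩
  rw [SM_apply_eq π a b c s hx]
  by_cases hc : c = a
  · cases s <;> simp [hc]
  · simp [hc]

lemma SM_one : SM p 1 = 1 := by
  ext a b
  rw [SM_apply_eq 1 a b b false rfl, Matrix.one_apply]
  by_cases h : b = a
  · subst h; simp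
  · simp [h, Ne.symm h]

lemma SM_mul (π₁ π₂ : Equiv.Perm (Fin p × Bool))
    (h₁ : π₁ ∈ Subgroup.centralizer {flipAll p}) :
    SM p (π₁ * π₂) = SM p π₁ * SM p π₂ := by
  ext a b
  rcases hx : π₂ (b, false) with ⟨c₀, s⟩
  rw [Matrix.mul_apply, Finset.sum_eq_single c₀]
  · rw [SM_apply_eq π₂ c₀ b c₀ s hx, if_pos rfl]
    have hval : (π₁ * π₂) (b, false) = π₁ (c₀, s) := by
      rw [Equiv.Perm.mul_apply, hx]
    rcases hy : π₁ (c₀, false) with ⟨d, t⟩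
    cases s
    · rw [SM_apply_eq π₁ a c₀ d t hy, SM_apply_eq _ a b d t (by rw [hval]; exact hy)]
      simp
    · have hy' : π₁ (c₀, true) = (d, !t) := by
        have h2 := (mem_centK_iff.mp h₁) (c₀, false)
        rw [hy] at h2
        simpa using h2
      rw [SM_apply_eq π₁ a c₀ d t hy, SM_apply_eq _ a b d (!t) (by rw [hval]; exact hy')]
      by_cases hd : d = a
      · subst hd; cases t <;> simp
      · simp [hd]
  · intro k _ hk
    rw [SM_apply_eq π₂ k b c₀ s hx, if_neg (fun hc => hk hc.symm), mul_zero]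
  · intro h
    exact absurd (Finset.mem_univ c₀) h

lemma SM_star (π : Equiv.Perm (Fin p × Bool)) (hπ : π ∈ Subgroup.centralizer {flipAll p}) :
    star (SM p π) = SM p π⁻¹ := by
  ext a b
  rw [Matrix.star_apply]
  rcases hx : π (a, false) with ⟨c, s⟩
  have hx' : π (a, true) = (c, !s) := by
    have h2 := (mem_centK_iff.mp hπ) (a, false)
    rw [hx] at h2
    simpa using h2
  rw [SM_apply_eq π b a c s hx]
  by_cases hc : c = b
  · subst hc
    cases s
    · have : π⁻¹ (c, false) = (a, false) := by rw [← hx]; simp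
      rw [SM_apply_eq π⁻¹ a c a false this, if_pos rfl]
      simp
    · rw [Bool.not_true] at hx'
      have : π⁻¹ (c, false) = (a, true) := by rw [← hx']; simp
      rw [SM_apply (p := p) π⁻¹, this]
      simp
  · have h1 : π⁻¹ (b, false) ≠ (a, false) := by
      intro hcon
      have : π (a, false) = (b, false) := by rw [← hcon]; simp
      rw [hx] at this
      exact hc (congrArg Prod.fst this)
    have h2 : π⁻¹ (b, false) ≠ (a, true) := by
      intro hcon
      have : π (a, true) = (b, false) := by rw [← hcon]; simp
      rw [hx'] at this
      exact hc (congrArg Prod.fst this)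
    rw [SM_apply (p := p) π⁻¹, if_neg h1, if_neg h2, if_neg hc]
    simp

lemma SM_unitary (π : Equiv.Perm (Fin p × Bool)) (hπ : π ∈ Subgroup.centralizer {flipAll p}) :
    SM p π ∈ Matrix.unitaryGroup (Fin p) ℂ := by
  rw [Unitary.mem_iff]
  constructor
  · rw [SM_star π hπ, ← SM_mul π⁻¹ π (Subgroup.inv_mem _ hπ), inv_mul_cancel, SM_one]
  · rw [SM_star π hπ, ← SM_mul π π⁻¹ hπ, mul_inv_cancel, SM_one]

def SMhom (p : ℕ) : ↥(Subgroup.centralizer {flipAll p}) →* Matrix.unitaryGroup (Fin p) ℂ where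
  toFun π := ⟨SM p π.1, SM_unitary π.1 π.2⟩
  map_one' := Subtype.ext SM_one
  map_mul' a b := Subtype.ext (SM_mul a.1 b.1 a.2)

lemma SMhom_injective (p : ℕ) : Function.Injective (SMhom p) := by
  intro π π' h
  have hSM : SM p π.1 = SM p π'.1 :=
    congrArg (fun u : Matrix.unitaryGroup (Fin p) ℂ => (u : Matrix (Fin p) (Fin p) ℂ)) h
  have key : ∀ b, π.1 (b, false) = π'.1 (b, false) := by
    intro b
    rcases hx : π.1 (b, false) with ⟨c, s⟩
    rcases hx' : π'.1 (b, false) with ⟨c', s'⟩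
    have h1 : SM p π.1 c b = SM p π'.1 c b := by rw [hSM]
    rw [SM_apply_eq _ c b c s hx, SM_apply_eq _ c b c' s' hx', if_pos rfl] at h1
    by_cases hc : c' = c
    · subst hc
      cases s <;> cases s' <;> first | rfl | (exfalso; norm_num at h1)
    · rw [if_neg hc] at h1
      cases s <;> norm_num at h1
  apply Subtype.ext
  apply Equiv.ext
  rintro ⟨b, v⟩
  cases v
  · exact key b
  · have h2 := (mem_centK_iff.mp π.2) (b, false)
    have h3 := (mem_centK_iff.mp π'.2) (b, false)
    simp only [Bool.not_false] at h2 h3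
    rw [h2, h3, key b]
lemma exists_SM {M : Matrix (Fin p) (Fin p) ℂ} (hM : M ∈ Matrix.unitaryGroup (Fin p) ℂ)
    (h01 : ∀ a b, M a b = 0 ∨ M a b = 1 ∨ M a b = -1) :
    ∃ π ∈ Subgroup.centralizer {flipAll p}, SM p π = M := by
  classical
  have sq01 : ∀ a b, M a b * M a b = 0 ∨ M a b * M a b = 1 := by
    intro a b; rcases h01 a b with h | h | h <;> simp [h]
  have hcol : ∀ b, ∃! a, M a b * M a b = 1 := by
    intro b
    apply exists_unique_of_sum_one (fun a => sq01 a b)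
    have h1 : (star M * M) b b = 1 := by
      rw [(Unitary.mem_iff.mp hM).1]; simp [Matrix.one_apply]
    rw [Matrix.mul_apply] at h1
    rw [← h1]
    refine Finset.sum_congr rfl fun a _ => ?_
    rcases h01 a b with h | h | h <;> simp [Matrix.star_apply, h]
  have hrow : ∀ a, ∃! b, M a b * M a b = 1 := by
    intro a
    apply exists_unique_of_sum_one (fun b => sq01 a b)
    have h1 : (M * star M) a a = 1 := by
      rw [(Unitary.mem_iff.mp hM).2]; simp [Matrix.one_apply]
    rw [Matrix.mul_apply] at h1
    rw [← h1]
    refine Finset.sum_congr rfl fun b _ => ?_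
    rcases h01 a b with h | h | h <;> simp [Matrix.star_apply, h]
  choose f hf hf' using hcol
  have hne : ∀ b, M (f b) b = 1 ∨ M (f b) b = -1 := by
    intro b
    rcases h01 (f b) b with h | h | h
    · exfalso
      have h2 : M (f b) b * M (f b) b = 1 := hf b
      rw [h] at h2
      simp at h2
    · exact Or.inl h
    · exact Or.inr h
  let s : Fin p → Bool := fun b => decide (M (f b) b = -1)
  let g : Fin p × Bool → Fin p × Bool := fun x => (f x.1, if x.2 then !(s x.1) else s x.1)
  have hginj : Function.Injective g := by
    rintro ⟨b, v⟩ ⟨b', v'⟩ hg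
    simp only [g, Prod.mk.injEq] at hg
    obtain ⟨hg1, hg2⟩ := hg
    have hb : b = b' := by
      refine (hrow (f b)).unique (hf b) ?_
      rw [hg1]; exact hf b'
    subst hb
    have hv : v = v' := by
      cases v <;> cases v'
      · rfl
      · simp at hg2
      · simp at hg2
      · rfl
    rw [hv]
  have hgbij := Finite.injective_iff_bijective.mp hginj
  let π := Equiv.ofBijective g hgbij
  have hπc : π ∈ Subgroup.centralizer {flipAll p} := by
    rw [mem_centK_iff]
    rintro ⟨b, v⟩
    show g (b, !v) = ((g (b, v)).1, !(g (b, v)).2)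
    simp only [g]
    cases v <;> simp
  refine ⟨π, hπc, ?_⟩
  ext a b
  have hπb : π (b, false) = (f b, s b) := by
    show g (b, false) = _
    simp [g]
  rw [SM_apply_eq π a b (f b) (s b) hπb]
  by_cases hab : f b = a
  · rw [if_pos hab]
    rcases hne b with h | h
    · have hsb : s b = false := by
        have : ¬ (M (f b) b = -1) := by rw [h]; norm_num
        simp [s, this]
      rw [hsb, hab] at *
      rw [h]
      rfl
    · have hsb : s b = true := by simp [s, h]
      rw [hsb, hab] at *
      rw [h]
      rfl
  · rw [if_neg hab]
    rcases h01 a b with h | h | h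
    · exact h.symm
    · exfalso
      exact hab ((hf' b a (show M a b * M a b = 1 by rw [h]; norm_num)).symm ▸ rfl)
    · exfalso
      exact hab ((hf' b a (show M a b * M a b = 1 by rw [h]; norm_num)).symm ▸ rfl)
end Signed

section Split
variable (p q : ℕ)

def Theta (p q : ℕ) : ↥(Subgroup.centralizer {flipAll p}) × Equiv.Perm (Fin q) →*
    Equiv.Perm ((Fin p × Bool) ⊕ Fin q) :=
  (Equiv.Perm.sumCongrHom _ _).comp
    (MonoidHom.prodMap (Subgroup.subtype _) (MonoidHom.id _))

lemma Theta_apply (x : ↥(Subgroup.centralizer {flipAll p}) × Equiv.Perm (Fin q)) :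
    Theta p q x = Equiv.sumCongr (x.1 : Equiv.Perm (Fin p × Bool)) x.2 := rfl

lemma Theta_injective : Function.Injective (Theta p q) := by
  rintro ⟨x1, x2⟩ ⟨y1, y2⟩ h
  have h2 : ((x1 : Equiv.Perm (Fin p × Bool)), x2) = ((y1 : Equiv.Perm (Fin p × Bool)), y2) :=
    Equiv.Perm.sumCongrHom_injective h
  simp only [Prod.mk.injEq] at h2 ⊢
  exact ⟨Subtype.ext h2.1, h2.2⟩

lemma sigSum_eq : sigSum p q = Equiv.sumCongr (flipAll p) (1 : Equiv.Perm (Fin q)) := rfl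

lemma Theta_mem_centralizer (x : ↥(Subgroup.centralizer {flipAll p}) × Equiv.Perm (Fin q)) :
    Theta p q x ∈ Subgroup.centralizer {sigSum p q} := by
  rw [Subgroup.mem_centralizer_iff]
  rintro g rfl
  have hx := Subgroup.mem_centralizer_iff.mp x.1.2 (flipAll p) rfl
  rw [Theta_apply, sigSum_eq]
  rw [Equiv.Perm.sumCongr_mul, Equiv.Perm.sumCongr_mul, hx, one_mul, mul_one]

lemma Theta_surj (π : Equiv.Perm ((Fin p × Bool) ⊕ Fin q))
    (hπ : π ∈ Subgroup.centralizer {sigSum p q}) :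
    ∃ x, Theta p q x = π := by
  classical
  have hcomm : ∀ ρ, ρ ∈ Subgroup.centralizer {sigSum p q} →
      ∀ z, sigSum p q (ρ z) = ρ (sigSum p q z) := by
    intro ρ hρ z
    have := Subgroup.mem_centralizer_iff.mp hρ (sigSum p q) rfl
    have h2 := congrArg (fun τ => τ z) this
    simpa using h2
  have hinl : ∀ ρ, ρ ∈ Subgroup.centralizer {sigSum p q} →
      ∀ x, ∃ y, ρ (Sum.inl x) = Sum.inl y := by
    intro ρ hρ x
    rcases hx : ρ (Sum.inl x) with y | y
    · exact ⟨y, rfl⟩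
    · exfalso
      have h1 := hcomm ρ hρ (Sum.inl x)
      rw [hx] at h1
      have h2 : sigSum p q (Sum.inr y : (Fin p × Bool) ⊕ Fin q) = Sum.inr y := rfl
      have h3 : sigSum p q (Sum.inl x : (Fin p × Bool) ⊕ Fin q) =
          Sum.inl (flipAll p x) := rfl
      rw [h2, h3] at h1
      have h4 : ρ (Sum.inl (flipAll p x)) = ρ (Sum.inl x) := by rw [hx, ← h1]
      have h5 : flipAll p x = x := Sum.inl.inj (ρ.injective h4)
      have h6 : (!x.2) = x.2 := congrArg Prod.snd h5
      simp at h6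
  have hinr : ∀ y, ∃ z, π (Sum.inr y) = Sum.inr z := by
    intro y
    rcases hy : π (Sum.inr y) with z | z
    · exfalso
      obtain ⟨w, hw⟩ := hinl π⁻¹ (Subgroup.inv_mem _ hπ) z
      have : π⁻¹ (Sum.inl z) = Sum.inr y := by rw [← hy]; simp
      rw [hw] at this
      exact Sum.inl_ne_inr this
    · exact ⟨z, rfl⟩
  have hinr' : ∀ y, ∃ z, π⁻¹ (Sum.inr y) = Sum.inr z := by
    intro y
    rcases hy : π⁻¹ (Sum.inr y) with z | z
    · exfalso
      obtain ⟨w, hw⟩ := hinl π hπ z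
      have : π (Sum.inl z) = Sum.inr y := by rw [← hy]; simp
      rw [hw] at this
      exact Sum.inl_ne_inr this
    · exact ⟨z, rfl⟩
  choose kf hkf using hinl π hπ
  choose kg hkg using hinl π⁻¹ (Subgroup.inv_mem _ hπ)
  choose rf hrf using hinr
  choose rg hrg using hinr'
  have hk1 : ∀ x, kg (kf x) = x := by
    intro x
    have : π⁻¹ (Sum.inl (kf x)) = Sum.inl x := by rw [← hkf]; simp
    rw [hkg] at this
    exact Sum.inl.inj this
  have hk2 : ∀ x, kf (kg x) = x := by
    intro x
    have : π (Sum.inl (kg x)) = Sum.inl x := by rw [← hkg]; simp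
    rw [hkf] at this
    exact Sum.inl.inj this
  have hr1 : ∀ x, rg (rf x) = x := by
    intro x
    have : π⁻¹ (Sum.inr (rf x)) = Sum.inr x := by rw [← hrf]; simp
    rw [hrg] at this
    exact Sum.inr.inj this
  have hr2 : ∀ x, rf (rg x) = x := by
    intro x
    have : π (Sum.inr (rg x)) = Sum.inr x := by rw [← hrg]; simp
    rw [hrf] at this
    exact Sum.inr.inj this
  let k : Equiv.Perm (Fin p × Bool) := ⟨kf, kg, hk1, hk2⟩
  let r : Equiv.Perm (Fin q) := ⟨rf, rg, hr1, hr2⟩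
  have hkc : k ∈ Subgroup.centralizer {flipAll p} := by
    rw [Subgroup.mem_centralizer_iff]
    rintro g rfl
    refine Equiv.ext fun x => ?_
    show flipAll p (kf x) = kf (flipAll p x)
    have h1 := hcomm π hπ (Sum.inl x)
    rw [hkf] at h1
    have h2 : sigSum p q (Sum.inl (kf x) : (Fin p × Bool) ⊕ Fin q) =
        Sum.inl (flipAll p (kf x)) := rfl
    have h3 : sigSum p q (Sum.inl x : (Fin p × Bool) ⊕ Fin q) = Sum.inl (flipAll p x) := rfl
    rw [h2, h3, hkf] at h1
    exact Sum.inl.inj h1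
  refine ⟨(⟨k, hkc⟩, r), ?_⟩
  rw [Theta_apply]
  refine Equiv.ext fun z => ?_
  rcases z with x | y
  · show Sum.inl (kf x) = π (Sum.inl x)
    rw [hkf]
  · show Sum.inr (rf y) = π (Sum.inr y)
    rw [hrf]

noncomputable def splitIso :
    ↥(Subgroup.centralizer {sigSum p q}) ≃*
      ↥(Subgroup.centralizer {flipAll p}) × Equiv.Perm (Fin q) := by
  refine (MulEquiv.ofBijective
    ((Theta p q).codRestrict (Subgroup.centralizer {sigSum p q}) (Theta_mem_centralizer p q))
    ⟨?_, ?_⟩).symm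
  · intro x y h
    exact Theta_injective p q (congrArg Subtype.val h)
  · rintro ⟨π, hπ⟩
    obtain ⟨x, hx⟩ := Theta_surj p q π hπ
    exact ⟨x, Subtype.ext hx⟩

end Split

section Assemble

lemma map_centralizer {G G' : Type*} [Group G] [Group G'] (f : G ≃* G') (a : G) :
    Subgroup.map (f : G →* G') (Subgroup.centralizer {a}) = Subgroup.centralizer {f a} := by
  ext x
  simp only [Subgroup.mem_map, Subgroup.mem_centralizer_iff, Set.mem_singleton_iff]
  constructor
  · rintro ⟨g, hg, rfl⟩ h rfl
    have h1 := hg a rfl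
    calc f a * f g = f (a * g) := (map_mul f a g).symm
      _ = f (g * a) := by rw [h1]
      _ = f g * f a := map_mul f g a
  · intro hx
    refine ⟨f.symm x, ?_, f.apply_symm_apply x⟩
    intro h hh
    rw [hh]
    have h1 := hx (f a) rfl
    apply f.injective
    rw [_root_.map_mul, _root_.map_mul, f.apply_symm_apply]
    exact h1

variable (p q : ℕ)

def Hgrp : Subgroup (Matrix.unitaryGroup (Fin (2*p+q)) ℂ) :=
  Subgroup.map (PMhom (Fin (2*p+q))) (Subgroup.centralizer {sigBig p q})

def HpGrp : Subgroup (Matrix.unitaryGroup (Fin p) ℂ) := (SMhom p).range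

lemma PM_conj {m : Type*} [DecidableEq m] [Fintype m] (π : Equiv.Perm m) :
    (PM π).map (starRingEnd ℂ) = PM π := by
  ext i j
  simp only [Matrix.map_apply, PM, Matrix.of_apply]
  split_ifs <;> simp

lemma mem_Hgrp_iff (U : Matrix.unitaryGroup (Fin (2*p+q)) ℂ) :
    U ∈ Hgrp p q ↔
      ((U : Matrix (Fin (2*p+q)) (Fin (2*p+q)) ℂ) * Jplus p q =
          Jplus p q * (U : Matrix (Fin (2*p+q)) (Fin (2*p+q)) ℂ).map (starRingEnd ℂ) ∧
        ∀ i j, (U : Matrix (Fin (2*p+q)) (Fin (2*p+q)) ℂ) i j = 0 ∨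
          (U : Matrix (Fin (2*p+q)) (Fin (2*p+q)) ℂ) i j = 1) := by
  constructor
  · rintro ⟨π, hπ, rfl⟩
    have hcoe : ((PMhom (Fin (2*p+q)) π : Matrix.unitaryGroup (Fin (2*p+q)) ℂ) :
        Matrix (Fin (2*p+q)) (Fin (2*p+q)) ℂ) = PM π := rfl
    constructor
    · rw [hcoe, PM_conj, Jplus_eq, ← PM_mul, ← PM_mul]
      have h1 := Subgroup.mem_centralizer_iff.mp hπ (sigBig p q) rfl
      rw [h1]
    · intro i j
      rw [hcoe, PM_apply]
      split_ifs <;> simp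
  · rintro ⟨hc, h01⟩
    obtain ⟨π, hPM⟩ := perm_of_01 U.2 h01
    have hconj : (U : Matrix (Fin (2*p+q)) (Fin (2*p+q)) ℂ).map (starRingEnd ℂ) =
        (U : Matrix (Fin (2*p+q)) (Fin (2*p+q)) ℂ) := by
      rw [hPM, PM_conj]
    rw [hconj, hPM, Jplus_eq, ← PM_mul, ← PM_mul] at hc
    have hcomm : π * sigBig p q = sigBig p q * π := PM_injective hc
    have hmem : π ∈ Subgroup.centralizer {sigBig p q} := by
      rw [Subgroup.mem_centralizer_iff]
      rintro g rfl
      exact hcomm.symm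
    exact ⟨π, hmem, Subtype.ext hPM.symm⟩

lemma mem_HpGrp_iff (M : Matrix.unitaryGroup (Fin p) ℂ) :
    M ∈ HpGrp p ↔ ∀ i j, (M : Matrix (Fin p) (Fin p) ℂ) i j = 0 ∨
      (M : Matrix (Fin p) (Fin p) ℂ) i j = 1 ∨
      (M : Matrix (Fin p) (Fin p) ℂ) i j = -1 := by
  constructor
  · rintro ⟨π, rfl⟩
    intro i j
    exact SM_mem01 π.1 i j
  · intro h01
    obtain ⟨π, hπc, hSM⟩ := exists_SM M.2 h01
    exact ⟨⟨π, hπc⟩, Subtype.ext hSM⟩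

noncomputable def finalIso : ↥(Hgrp p q) ≃* ↥(HpGrp p) × Equiv.Perm (Fin q) := by
  refine MulEquiv.trans
    (MulEquiv.trans
      (Subgroup.equivMapOfInjective (Subgroup.centralizer {sigBig p q})
        (PMhom (Fin (2*p+q))) (PMhom_injective)).symm
      (MulEquiv.trans
        ((permCongrMul (Ee p q)).subgroupMap (Subgroup.centralizer {sigBig p q}))
        (MulEquiv.subgroupCongr ?_)))
    (MulEquiv.trans (splitIso p q)
      (MulEquiv.prodCongr (MonoidHom.ofInjective (SMhom_injective p)) (MulEquiv.refl _)))
  rw [map_centralizer]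
  congr 1
  rw [sigBig, MulEquiv.apply_symm_apply]

end Assemble


/-- The group `S̄_n = {U ∈ U_n | U J = J Ū, U_{ij} ∈ {0,1}}` (with `J = J_+(p,q)`) is
isomorphic to `H_p × S_q`, where `H_p` is the hyperoctahedral group of `p × p`
monomial matrices with nonzero entries `±1`. -/
theorem stmt_10 (p q : ℕ) :
    ∃ (H : Subgroup (Matrix.unitaryGroup (Fin (2 * p + q)) ℂ))
      (Hp : Subgroup (Matrix.unitaryGroup (Fin p) ℂ)),
      (∀ U : Matrix.unitaryGroup (Fin (2 * p + q)) ℂ,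
        U ∈ H ↔ ((U : Matrix (Fin (2 * p + q)) (Fin (2 * p + q)) ℂ) * Jplus p q =
            Jplus p q *
              (U : Matrix (Fin (2 * p + q)) (Fin (2 * p + q)) ℂ).map (starRingEnd ℂ) ∧
          ∀ i j, (U : Matrix (Fin (2 * p + q)) (Fin (2 * p + q)) ℂ) i j = 0 ∨
            (U : Matrix (Fin (2 * p + q)) (Fin (2 * p + q)) ℂ) i j = 1)) ∧
      (∀ M : Matrix.unitaryGroup (Fin p) ℂ,
        M ∈ Hp ↔ ∀ i j, (M : Matrix (Fin p) (Fin p) ℂ) i j = 0 ∨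
          (M : Matrix (Fin p) (Fin p) ℂ) i j = 1 ∨
          (M : Matrix (Fin p) (Fin p) ℂ) i j = -1) ∧
      Nonempty (H ≃* Hp × Equiv.Perm (Fin q)) := by
  exact ⟨Hgrp p q, HpGrp p, mem_Hgrp_iff p q, mem_HpGrp_iff p, ⟨finalIso p q⟩⟩
end
end

section
/- With the signed Kronecker symbols of the super-easy calculus (defined relative to a super-identity $J$ with involution $i \mapsto \bar i$ and signs $\varepsilon(i)$), the adjoint of the map $T_\pi$ associated to the one-block partition $1_{k,l}$ equals the map associated to its upside-down turning: $T_{1_{k,l}}^* = T_{1_{l,k}}$. -/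
/-- The sequence `(j_1,…,j_l, ī_k,…,ī_1)` appearing in the signed Kronecker symbol of
the one-block partition `1_{k,l}`. -/
def altSeq (n k l : ℕ) (bar : Fin n → Fin n) (I : Fin k → Fin n) (Jv : Fin l → Fin n) :
    Fin (l + k) → Fin n :=
  fun m => if h : (m : ℕ) < l then Jv ⟨m, h⟩
    else bar (I ⟨k - 1 - ((m : ℕ) - l), by omega⟩)

/-- The alternating condition `l_1 = l̄_2 = l_3 = l̄_4 = ⋯` on a sequence. -/
def altCond (n m : ℕ) (bar : Fin n → Fin n) (L : Fin m → Fin n) : Prop :=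
  ∀ a b : Fin m,
    ((a : ℕ) % 2 = (b : ℕ) % 2 → L a = L b) ∧
    ((a : ℕ) % 2 ≠ (b : ℕ) % 2 → L a = bar (L b))

open Classical in
/-- The signed Kronecker symbol of the one-block partition `1_{k,l}`:
`δ_{1_{k,l}}(i,j) = ε(i_1)ε(i_3)⋯ × ε(j_1)ε(j_3)⋯ × δ_alt(j_1,…,j_l,ī_k,…,ī_1)`. -/
noncomputable def delta1 (n k l : ℕ) (bar : Fin n → Fin n) (eps : Fin n → ℂ)
    (I : Fin k → Fin n) (Jv : Fin l → Fin n) : ℂ :=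
  (∏ a : Fin k, if (a : ℕ) % 2 = 0 then eps (I a) else 1) *
  (∏ b : Fin l, if (b : ℕ) % 2 = 0 then eps (Jv b) else 1) *
  (if altCond n (l + k) bar (altSeq n k l bar I Jv) then 1 else 0)

/-- The map `T_{1_{k,l}} : (ℂ^n)^{⊗k} → (ℂ^n)^{⊗l}` as a matrix. -/
noncomputable def T1 (n k l : ℕ) (bar : Fin n → Fin n) (eps : Fin n → ℂ) :
    Matrix (Fin l → Fin n) (Fin k → Fin n) ℂ :=
  Matrix.of fun Jv I => delta1 n k l bar eps I Jv


lemma altSeq_flip (n k l : ℕ) (bar : Fin n → Fin n) (hbar : ∀ i, bar (bar i) = i)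
    (I : Fin k → Fin n) (Jv : Fin l → Fin n) (m : Fin (k + l)) :
    altSeq n l k bar Jv I m
      = bar (altSeq n k l bar I Jv ⟨l + k - 1 - (m : ℕ), by omega⟩) := by
  unfold altSeq
  rcases Nat.lt_or_ge (m : ℕ) k with hm | hm
  · rw [dif_pos hm, dif_neg (by omega : ¬ (l + k - 1 - (m : ℕ) < l)), hbar]
    congr 1
    exact Fin.ext (by simp; omega)
  · rw [dif_neg (by omega : ¬ ((m : ℕ) < k)),
      dif_pos (by omega : l + k - 1 - (m : ℕ) < l)]
    congr 1
    exact congrArg Jv (Fin.ext (by simp; omega))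

lemma alt_flip (n k l : ℕ) (hkl : Even (k + l)) (bar : Fin n → Fin n)
    (hbar : ∀ i, bar (bar i) = i) (I : Fin k → Fin n) (Jv : Fin l → Fin n)
    (h : altCond n (l + k) bar (altSeq n k l bar I Jv)) :
    altCond n (k + l) bar (altSeq n l k bar Jv I) := by
  obtain ⟨c, hc⟩ := hkl
  intro a b
  have ha := a.isLt
  have hb := b.isLt
  set a' : Fin (l + k) := ⟨l + k - 1 - (a : ℕ), by omega⟩ with ha'
  set b' : Fin (l + k) := ⟨l + k - 1 - (b : ℕ), by omega⟩ with hb'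
  have hA := altSeq_flip n k l bar hbar I Jv a
  have hB := altSeq_flip n k l bar hbar I Jv b
  obtain ⟨h1, h2⟩ := h a' b'
  constructor
  · intro hp
    have : (a' : ℕ) % 2 = (b' : ℕ) % 2 := by simp [ha', hb']; omega
    rw [hA, hB, h1 this]
  · intro hp
    have : (a' : ℕ) % 2 ≠ (b' : ℕ) % 2 := by simp [ha', hb']; omega
    rw [hA, hB, h2 this, hbar]

lemma delta1_flip (n k l : ℕ) (hkl : Even (k + l)) (bar : Fin n → Fin n)
    (hbar : ∀ i, bar (bar i) = i) (eps : Fin n → ℂ)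
    (I : Fin k → Fin n) (Jv : Fin l → Fin n) :
    delta1 n k l bar eps I Jv = delta1 n l k bar eps Jv I := by
  have hiff : altCond n (l + k) bar (altSeq n k l bar I Jv)
      ↔ altCond n (k + l) bar (altSeq n l k bar Jv I) :=
    ⟨alt_flip n k l hkl bar hbar I Jv,
     alt_flip n l k (by rwa [Nat.add_comm]) bar hbar Jv I⟩
  classical
  unfold delta1
  rw [if_congr hiff rfl rfl]
  ring

lemma delta1_star (n k l : ℕ) (bar : Fin n → Fin n) (eps : Fin n → ℂ)
    (heps : ∀ i, eps i = 1 ∨ eps i = -1) (I : Fin k → Fin n) (Jv : Fin l → Fin n) :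
    star (delta1 n k l bar eps I Jv) = delta1 n k l bar eps I Jv := by
  have he : ∀ i, star (eps i) = eps i := fun i => by
    rcases heps i with h | h <;> simp [h]
  show (starRingEnd ℂ) _ = _
  unfold delta1
  rw [map_mul, map_mul, map_prod, map_prod]
  congr 1
  · congr 1
    · exact Finset.prod_congr rfl fun a _ => by
        rw [apply_ite (starRingEnd ℂ), map_one]; exact if_congr Iff.rfl (he _) rfl
    · exact Finset.prod_congr rfl fun a _ => by
        rw [apply_ite (starRingEnd ℂ), map_one]; exact if_congr Iff.rfl (he _) rfl
  · rw [apply_ite (starRingEnd ℂ), map_one, map_zero]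

/-- With the signed Kronecker symbols of the super-easy calculus, the adjoint of the
map of the one-block partition `1_{k,l}` is the map of its upside-down turning:
`T_{1_{k,l}}^* = T_{1_{l,k}}`. -/
theorem stmt_16 (n k l : ℕ) (hkl : Even (k + l))
    (bar : Fin n → Fin n) (hbar : ∀ i, bar (bar i) = i)
    (eps : Fin n → ℂ) (heps : ∀ i, eps i = 1 ∨ eps i = -1)
    (ε : ℂ) (hε : ε = 1 ∨ ε = -1) (hcompat : ∀ i, eps i * eps (bar i) = ε) :
    (T1 n k l bar eps).conjTranspose = T1 n l k bar eps := by
  ext I Jv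
  simp only [Matrix.conjTranspose_apply, T1, Matrix.of_apply]
  rw [delta1_star n k l bar eps heps I Jv, delta1_flip n k l hkl bar hbar eps I Jv]
end
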